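/- arXiv:2605.24673 — 2 statements merged into one kernel-verified Lean document; each statement's English description precedes it below -/
import Mathlib

section
/- For all real numbers n ≥ 1 and k with 1 ≤ k ≤ n/2, the inequality √n + (√32) k / n ≥ √( n(n+4)² + 32k² − 32k ) / (n+4) holds. -/
open MeasureTheory ProbabilityTheory Filter Matrix
open scoped ENNReal NNReal BigOperators

noncomputable section

/-- Euclidean distance between two vectors in `ℝ^p`. -/
def dist2 {p : ℕ} (a b : Fin p → ℝ) : ℝ := Real.sqrt (∑ l, (a l - b l) ^ 2)

/-- `E : Ω → ℝ^{n×p}` has independent, mean-zero rows whose sub-Gaussian norm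
`‖E_i‖_{ψ₂} = sup_{‖v‖=1} inf {K > 0 : 𝔼 exp((vᵀE_i)²/K²) ≤ 2}` is at most `σ`. -/
def HasIndepSubGaussianRows {Ω : Type} [MeasurableSpace Ω] (μ : Measure Ω)
    {n p : ℕ} (E : Ω → Matrix (Fin n) (Fin p) ℝ) (σ : ℝ) : Prop :=
  iIndepFun (m := fun _ : Fin n => (inferInstance : MeasurableSpace (Fin p → ℝ)))
      (fun i ω => E ω i) μ ∧
  (∀ i l, ∫ ω, E ω i l ∂μ = 0) ∧
  (∀ i, ∀ v : Fin p → ℝ, ∑ l, (v l) ^ 2 = 1 → ∀ K : ℝ, σ < K →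
    ∫ ω, Real.exp ((∑ l, v l * E ω i l) ^ 2 / K ^ 2) ∂μ ≤ 2)

/-- Index type for the potential edges `{(j,k) : j < k}` of a graph on `Fin n`. -/
abbrev EdgeIdx (n : ℕ) := {e : Fin n × Fin n // e.1 < e.2}

/-- Oriented edge-incidence matrix of the affinity matrix `Φ`: the column indexed by a
pair `(j,k)` with `j < k` has entry `√Φ_jk` in row `j`, `-√Φ_jk` in row `k` and zeros
elsewhere (pairs that are not edges contribute zero columns). -/
def incidence {n : ℕ} (Φ : Matrix (Fin n) (Fin n) ℝ) : Matrix (Fin n) (EdgeIdx n) ℝ :=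
  Matrix.of fun i e =>
    if i = e.val.1 then Real.sqrt (Φ e.val.1 e.val.2)
    else if i = e.val.2 then -Real.sqrt (Φ e.val.1 e.val.2) else 0

/-- The four Penrose conditions: `B` is the Moore–Penrose pseudoinverse of `A`. -/
def IsPInv {m n : Type} [Fintype m] [Fintype n]
    (A : Matrix m n ℝ) (B : Matrix n m ℝ) : Prop :=
  A * B * A = A ∧ B * A * B = B ∧ (A * B)ᵀ = A * B ∧ (B * A)ᵀ = B * A

/-- Maximal absolute entry `‖M‖_max` of a matrix. -/
def maxEntry {m n : Type} [Fintype m] [Fintype n] (M : Matrix m n ℝ) : ℝ :=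
  ⨆ i, ⨆ j, |M i j|

/-- The graph whose edges are the pairs with strictly positive affinity. -/
def graphOf {n : ℕ} (Φ : Matrix (Fin n) (Fin n) ℝ) : SimpleGraph (Fin n) :=
  SimpleGraph.fromRel fun i j => 0 < Φ i j

/-- A valid affinity matrix: symmetric, nonnegative entries, zero diagonal, connected. -/
def IsValidAffinity {n : ℕ} (Φ : Matrix (Fin n) (Fin n) ℝ) : Prop :=
  Φᵀ = Φ ∧ (∀ i j, 0 ≤ Φ i j) ∧ (∀ i, Φ i i = 0) ∧ (graphOf Φ).Connected

/-- The convex clustering penalty `Σ_{i<j} √Φ_ij ‖U_{i·} - U_{j·}‖₂`. -/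
def penaltySum {n p : ℕ} (Φ : Matrix (Fin n) (Fin n) ℝ)
    (U : Matrix (Fin n) (Fin p) ℝ) : ℝ :=
  ∑ e : EdgeIdx n, Real.sqrt (Φ e.val.1 e.val.2) * dist2 (U e.val.1) (U e.val.2)

/-- The convex clustering objective
`U ↦ γ Σ_{i<j} √Φ_ij ‖U_{i·} - U_{j·}‖₂ + (1/2) ‖U - X‖_F²`. -/
def ccObj {n p : ℕ} (γ : ℝ) (Φ : Matrix (Fin n) (Fin n) ℝ)
    (X U : Matrix (Fin n) (Fin p) ℝ) : ℝ :=
  γ * penaltySum Φ U + (1 / 2) * ∑ i, ∑ l, (U i l - X i l) ^ 2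

/-- Diameter `max_{a,b ∈ C} ‖a - b‖₂` of a finite set of centers. -/
def diamC {p : ℕ} (C : Finset (Fin p → ℝ)) : ℝ :=
  ⨆ a : C, ⨆ b : C, dist2 a.val b.val

/-- Graph Laplacian `L = D - Φ`. -/
def lap {n : ℕ} (Φ : Matrix (Fin n) (Fin n) ℝ) : Matrix (Fin n) (Fin n) ℝ :=
  Matrix.diagonal (fun i => ∑ j, Φ i j) - Φ

/-- Two-cluster membership (clusters `{0,…,n/2-1}` and `{n/2,…,n-1}`). -/
def sameCluster {n : ℕ} (i j : Fin n) : Prop := ((i : ℕ) < n / 2 ↔ (j : ℕ) < n / 2)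

instance {n : ℕ} (i j : Fin n) : Decidable (sameCluster i j) := by
  unfold sameCluster; infer_instance

/-- `Φ` is the adjacency matrix of the two-cluster stochastic block model with
within-cluster probability `pw` and between-cluster probability `pb`. -/
def IsSBM {Ω : Type} [MeasurableSpace Ω] (μ : Measure Ω) {n : ℕ}
    (Φ : Ω → Matrix (Fin n) (Fin n) ℝ) (pw pb : ℝ) : Prop :=
  (∀ ω, (Φ ω)ᵀ = Φ ω) ∧ (∀ ω i, Φ ω i i = 0) ∧
  (∀ ω i j, Φ ω i j = 0 ∨ Φ ω i j = 1) ∧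
  iIndepFun (m := fun _ : EdgeIdx n => (inferInstance : MeasurableSpace ℝ))
    (fun e ω => Φ ω e.val.1 e.val.2) μ ∧
  (∀ e : EdgeIdx n, μ {ω | Φ ω e.val.1 e.val.2 = 1} =
      ENNReal.ofReal (if sameCluster e.val.1 e.val.2 then pw else pb))

/-- The matrix whose first `n/2` rows equal `c₁` and remaining rows equal `c₂`. -/
def twoClusterU (n : ℕ) {p : ℕ} (c₁ c₂ : Fin p → ℝ) : Matrix (Fin n) (Fin p) ℝ :=
  Matrix.of fun i l => if (i : ℕ) < n / 2 then c₁ l else c₂ l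

/-- `Σ_{(i,j) ∈ E} Φ_ij ‖U_{i·} - U_{j·}‖₂` (for a 0/1 matrix `Φ`, the sum of
`‖U_{i·} - U_{j·}‖₂` over the edges `i < j` with `Φ_ij = 1`). -/
def cutSum {n p : ℕ} (Φv : Matrix (Fin n) (Fin n) ℝ)
    (U : Matrix (Fin n) (Fin p) ℝ) : ℝ :=
  ∑ e : EdgeIdx n, Φv e.val.1 e.val.2 * dist2 (U e.val.1) (U e.val.2)

/-- Adjacency matrix of the advantageous two-clique graph `G(n,k)`: two cliques on
`{0,…,n/2-1}` and `{n/2,…,n-1}` together with the `k` bridges `{i, i+n/2}`, `i < k`. -/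
def advPhi (n k : ℕ) : Matrix (Fin n) (Fin n) ℝ :=
  Matrix.of fun i j =>
    if i ≠ j ∧ (((i : ℕ) < n / 2 ∧ (j : ℕ) < n / 2) ∨
        (n / 2 ≤ (i : ℕ) ∧ n / 2 ≤ (j : ℕ)) ∨
        ((j : ℕ) = (i : ℕ) + n / 2 ∧ (i : ℕ) < k) ∨
        ((i : ℕ) = (j : ℕ) + n / 2 ∧ (j : ℕ) < k))
    then 1 else 0

/-- The `n×n` matrix `(1/n) 1_n 1_nᵀ`. -/
def onesProj (n : ℕ) : Matrix (Fin n) (Fin n) ℝ :=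
  Matrix.of fun _ _ => (1 : ℝ) / n

/-- Expected adjacency matrix `B ⊗ J - p_w I_n` of the two-cluster stochastic block
model (clusters being the first and last `n/2` indices). -/
def sbmExpected (n : ℕ) (pw pb : ℝ) : Matrix (Fin n) (Fin n) ℝ :=
  Matrix.of fun i j =>
    (if ((i : ℕ) < n / 2 ↔ (j : ℕ) < n / 2) then pw else pb) -
      (if i = j then pw else 0)

end
/-- elementary inequality used for the advantageous graph. -/
theorem stmt13 :
    ∀ n k : ℝ, 1 ≤ n → 1 ≤ k → k ≤ n / 2 →
      Real.sqrt (n * (n + 4) ^ 2 + 32 * k ^ 2 - 32 * k) / (n + 4) ≤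
        Real.sqrt n + Real.sqrt 32 * k / n := by
  intro n k hn hk hkn
  have hn0 : (0:ℝ) < n := by linarith
  have h4 : (0:ℝ) < n + 4 := by linarith
  have step1 : Real.sqrt (n * (n + 4) ^ 2 + 32 * k ^ 2 - 32 * k) ≤
      Real.sqrt (n * (n + 4) ^ 2 + 32 * k ^ 2) := by
    apply Real.sqrt_le_sqrt
    nlinarith [sq_nonneg k]
  have step2 : Real.sqrt (n * (n + 4) ^ 2 + 32 * k ^ 2) ≤
      Real.sqrt (n * (n + 4) ^ 2) + Real.sqrt (32 * k ^ 2) := by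
    have h := Real.sqrt_le_sqrt (show n * (n + 4) ^ 2 + 32 * k ^ 2 ≤
        (Real.sqrt (n * (n + 4) ^ 2) + Real.sqrt (32 * k ^ 2)) ^ 2 by
      nlinarith [Real.sq_sqrt (show (0:ℝ) ≤ n * (n + 4) ^ 2 by positivity),
        Real.sq_sqrt (show (0:ℝ) ≤ 32 * k ^ 2 by positivity),
        Real.sqrt_nonneg (n * (n + 4) ^ 2), Real.sqrt_nonneg (32 * k ^ 2)])
    rwa [Real.sqrt_sq (by positivity)] at h
  have e1 : Real.sqrt (n * (n + 4) ^ 2) = Real.sqrt n * (n + 4) := by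
    rw [Real.sqrt_mul hn0.le, Real.sqrt_sq h4.le]
  have e2 : Real.sqrt (32 * k ^ 2) = Real.sqrt 32 * k := by
    rw [Real.sqrt_mul (by norm_num), Real.sqrt_sq (by linarith)]
  have h32 : 0 ≤ Real.sqrt 32 := Real.sqrt_nonneg _
  have : Real.sqrt (n * (n + 4) ^ 2 + 32 * k ^ 2 - 32 * k) / (n + 4) ≤
      Real.sqrt n + Real.sqrt 32 * k / (n + 4) := by
    have e3 : Real.sqrt n + Real.sqrt 32 * k / (n + 4) =
        (Real.sqrt n * (n + 4) + Real.sqrt 32 * k) / (n + 4) := by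
      field_simp
    rw [e3, div_le_div_iff_of_pos_right h4]
    calc Real.sqrt (n * (n + 4) ^ 2 + 32 * k ^ 2 - 32 * k)
        ≤ Real.sqrt (n * (n + 4) ^ 2) + Real.sqrt (32 * k ^ 2) := step1.trans step2
      _ = Real.sqrt n * (n + 4) + Real.sqrt 32 * k := by rw [e1, e2]
  refine this.trans (by gcongr; linarith)
end

section
/- Let n ≥ 6 be even and 1 ≤ k ≤ n/2, let G(n,k) be the advantageous two-clique graph with Laplacian L, and let L†_{·j} denote the j-th column of the Moore–Penrose pseudoinverse of L. Then for every bridge edge {i, i+n/2} with 1 ≤ i ≤ k, ‖L†_{·i} − L†_{·(i+n/2)}‖₂² = ( n(n+4)² + 32k² − 32k ) / ( 4k²(n+4)² ), and every edge (j,ℓ) of G(n,k) satisfies ‖L†_{·j} − L†_{·ℓ}‖₂² ≤ ( n(n+4)² + 32k² − 32k ) / ( 4k²(n+4)² ); i.e., the maximum of ‖L†_{·j} − L†_{·ℓ}‖₂² over edges of G(n,k) is attained at the bridge edges. -/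
open MeasureTheory ProbabilityTheory Filter Matrix
open scoped ENNReal NNReal BigOperators

namespace Stmt14Aux

noncomputable section

variable (m k : ℕ)

def Jm : Matrix (Fin m) (Fin m) ℝ := Matrix.of fun _ _ => 1

def dd : Fin m → ℝ := fun p => if (p : ℕ) < k then (m : ℝ) + 2 else (m : ℝ)

def uu : Fin m → ℝ := fun p => (dd m k p)⁻¹

def Amat : Matrix (Fin m) (Fin m) ℝ := (m : ℝ) • 1 - Jm m

def Ainv : Matrix (Fin m) (Fin m) ℝ := ((m:ℝ))⁻¹ • 1 - (((m:ℝ))^2)⁻¹ • Jm m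

def Bmat : Matrix (Fin m) (Fin m) ℝ := Matrix.diagonal (dd m k) - Jm m

def cc : ℝ := (m:ℝ) * ((m:ℝ)+2) / (2*(k:ℝ))

def Binv : Matrix (Fin m) (Fin m) ℝ :=
  Matrix.diagonal (uu m k) + cc m k • Matrix.vecMulVec (uu m k) (uu m k)

variable {m k}

lemma hm0 (hm : 3 ≤ m) : (0:ℝ) < (m:ℝ) := by
  exact_mod_cast Nat.lt_of_lt_of_le (by norm_num) hm

lemma hk0 (hk1 : 1 ≤ k) : (0:ℝ) < (k:ℝ) := by exact_mod_cast hk1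

lemma dd_ne (hm : 3 ≤ m) (p : Fin m) : dd m k p ≠ 0 := by
  have h := hm0 (m := m) hm
  unfold dd
  split_ifs <;> nlinarith

lemma dd_mul_uu (hm : 3 ≤ m) (p : Fin m) : dd m k p * uu m k p = 1 :=
  mul_inv_cancel₀ (dd_ne hm p)

lemma sum_if_lt (hk : k ≤ m) (x y : ℝ) :
    ∑ p : Fin m, (if (p : ℕ) < k then x else y) = k * x + ((m:ℝ) - k) * y := by
  rw [Fin.sum_univ_eq_sum_range (fun idx => if idx < k then x else y)]
  rw [Finset.range_eq_Ico, ← Finset.sum_Ico_consecutive _ (Nat.zero_le k) hk]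
  rw [Finset.sum_congr rfl (fun z hz => if_pos (Finset.mem_Ico.mp hz).2),
      Finset.sum_congr rfl (fun z hz => if_neg (Nat.not_lt.mpr (Finset.mem_Ico.mp hz).1))]
  rw [Finset.sum_const, Finset.sum_const, Nat.card_Ico, Nat.card_Ico, nsmul_eq_mul, nsmul_eq_mul]
  push_cast [Nat.cast_sub hk, Nat.sub_zero]
  ring

lemma uu_eq (p : Fin m) :
    uu m k p = if (p:ℕ) < k then ((m:ℝ)+2)⁻¹ else ((m:ℝ))⁻¹ := by
  unfold uu dd; split_ifs <;> rfl

lemma sum_uu (hk : k ≤ m) :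
    ∑ p, uu m k p = (k:ℝ) * ((m:ℝ)+2)⁻¹ + ((m:ℝ) - k) * ((m:ℝ))⁻¹ := by
  rw [Finset.sum_congr rfl fun p _ => uu_eq p, sum_if_lt hk]

lemma sum_uu_sq (hk : k ≤ m) :
    ∑ p, (uu m k p)^2 = (k:ℝ) * (((m:ℝ)+2)⁻¹)^2 + ((m:ℝ) - k) * (((m:ℝ))⁻¹)^2 := by
  have : ∀ p : Fin m, (uu m k p)^2
      = if (p:ℕ) < k then (((m:ℝ)+2)⁻¹)^2 else (((m:ℝ))⁻¹)^2 := by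
    intro p; rw [uu_eq]; split_ifs <;> rfl
  rw [Finset.sum_congr rfl fun p _ => this p, sum_if_lt hk]

/-- Entry formula for `Binv`. -/
lemma Binv_apply (r s : Fin m) :
    Binv m k r s = (if r = s then uu m k s else 0) + (cc m k * uu m k s) * uu m k r := by
  simp only [Binv, Matrix.add_apply, Matrix.diagonal_apply, Matrix.smul_apply,
    Matrix.vecMulVec_apply, smul_eq_mul]
  split_ifs with h
  · rw [h]; ring
  · ring

/-- Entry formula for `Ainv`. -/
lemma Ainv_apply (r s : Fin m) :
    Ainv m r s = (if r = s then ((m:ℝ))⁻¹ else 0) - (((m:ℝ))^2)⁻¹ := by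
  simp only [Ainv, Matrix.sub_apply, Matrix.smul_apply, Matrix.one_apply, Jm,
    Matrix.of_apply, smul_eq_mul]
  split_ifs <;> ring

lemma Jm_mul_Jm : Jm m * Jm m = (m:ℝ) • Jm m := by
  ext i j
  simp [Jm, Matrix.mul_apply]

lemma Amat_mul_Ainv (hm : 3 ≤ m) :
    Amat m * Ainv m = 1 - ((m:ℝ))⁻¹ • Jm m := by
  have h := (hm0 (m := m) hm).ne'
  unfold Amat Ainv
  simp only [Matrix.sub_mul, Matrix.mul_sub, smul_mul_assoc, Matrix.mul_smul,
    Matrix.one_mul, Matrix.mul_one, Jm_mul_Jm, smul_smul]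
  match_scalars <;> field_simp <;> ring

lemma Ainv_mul_Amat (hm : 3 ≤ m) :
    Ainv m * Amat m = 1 - ((m:ℝ))⁻¹ • Jm m := by
  have h := (hm0 (m := m) hm).ne'
  unfold Amat Ainv
  simp only [Matrix.sub_mul, Matrix.mul_sub, smul_mul_assoc, Matrix.mul_smul,
    Matrix.one_mul, Matrix.mul_one, Jm_mul_Jm, smul_smul]
  match_scalars <;> field_simp <;> ring

lemma Jm_mul_Amat : Jm m * Amat m = 0 := by
  unfold Amat
  rw [Matrix.mul_sub, Matrix.mul_smul, Matrix.mul_one, Jm_mul_Jm, sub_self]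

lemma Amat_mul_Jm : Amat m * Jm m = 0 := by
  unfold Amat
  rw [Matrix.sub_mul, smul_mul_assoc, Matrix.one_mul, Jm_mul_Jm, sub_self]

lemma Jm_mul_Ainv (hm : 3 ≤ m) : Jm m * Ainv m = 0 := by
  have h := (hm0 (m := m) hm).ne'
  unfold Ainv
  simp only [Matrix.sub_mul, Matrix.mul_sub, smul_mul_assoc, Matrix.mul_smul,
    Matrix.one_mul, Matrix.mul_one, Jm_mul_Jm, smul_smul]
  match_scalars <;> field_simp <;> ring

lemma Ainv_mul_Jm (hm : 3 ≤ m) : Ainv m * Jm m = 0 := by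
  have h := (hm0 (m := m) hm).ne'
  unfold Ainv
  simp only [Matrix.sub_mul, Matrix.mul_sub, smul_mul_assoc, Matrix.mul_smul,
    Matrix.one_mul, Matrix.mul_one, Jm_mul_Jm, smul_smul]
  match_scalars <;> field_simp <;> ring

lemma vecMulVec_mul_vecMulVec (a b c d : Fin m → ℝ) :
    Matrix.vecMulVec a b * Matrix.vecMulVec c d = (∑ r, b r * c r) • Matrix.vecMulVec a d := by
  ext i j
  simp only [Matrix.mul_apply, Matrix.vecMulVec_apply, Matrix.smul_apply, smul_eq_mul]
  rw [Finset.sum_mul]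
  exact Finset.sum_congr rfl fun r _ => by ring

lemma diagonal_mul_vecMulVec (d a b : Fin m → ℝ) :
    Matrix.diagonal d * Matrix.vecMulVec a b = Matrix.vecMulVec (fun i => d i * a i) b := by
  ext i j
  simp only [Matrix.diagonal_mul, Matrix.vecMulVec_apply]
  ring

lemma vecMulVec_mul_diagonal (a b d : Fin m → ℝ) :
    Matrix.vecMulVec a b * Matrix.diagonal d = Matrix.vecMulVec a (fun j => b j * d j) := by
  ext i j
  simp only [Matrix.mul_diagonal, Matrix.vecMulVec_apply]
  ring

lemma Jm_eq : Jm m = Matrix.vecMulVec (fun _ => (1:ℝ)) (fun _ => (1:ℝ)) := by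
  ext i j; simp [Jm, Matrix.vecMulVec_apply]

lemma cc_key (hm : 3 ≤ m) (hk1 : 1 ≤ k) (hk : k ≤ m) :
    cc m k * (1 - ((k:ℝ) * ((m:ℝ)+2)⁻¹ + ((m:ℝ) - k) * ((m:ℝ))⁻¹)) = 1 := by
  have h1 := (hm0 (m := m) hm).ne'
  have h2 := (hk0 (k := k) hk1).ne'
  have h3 : ((m:ℝ)+2) ≠ 0 := by have := hm0 (m := m) hm; nlinarith
  unfold cc
  field_simp
  ring

lemma diag_dd_mul_Binv_aux (hm : 3 ≤ m) :
    Matrix.diagonal (dd m k) * Matrix.diagonal (uu m k) = 1 := by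
  rw [Matrix.diagonal_mul_diagonal]
  have : (fun p => dd m k p * uu m k p) = fun _ => (1:ℝ) :=
    funext fun p => dd_mul_uu hm p
  rw [this, Matrix.diagonal_one]

lemma Bmat_mul_Binv (hm : 3 ≤ m) (hk1 : 1 ≤ k) (hk : k ≤ m) :
    Bmat m k * Binv m k = 1 := by
  unfold Bmat Binv
  rw [Jm_eq]
  rw [Matrix.sub_mul, Matrix.mul_add, Matrix.mul_add, Matrix.mul_smul, Matrix.mul_smul,
    diag_dd_mul_Binv_aux hm, diagonal_mul_vecMulVec, vecMulVec_mul_diagonal,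
    vecMulVec_mul_vecMulVec]
  have e1 : (fun i => dd m k i * uu m k i) = fun _ => (1:ℝ) := funext fun p => dd_mul_uu hm p
  have e2 : (fun j => (1:ℝ) * uu m k j) = uu m k := funext fun p => one_mul _
  rw [e1, e2, sum_uu hk, smul_smul]
  have : (1 : Matrix (Fin m) (Fin m) ℝ)
      + cc m k • Matrix.vecMulVec (fun _ => (1:ℝ)) (uu m k)
      - (Matrix.vecMulVec (fun _ => (1:ℝ)) (uu m k)
        + (cc m k * ((k:ℝ) * ((m:ℝ)+2)⁻¹ + ((m:ℝ) - k) * ((m:ℝ))⁻¹))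
          • Matrix.vecMulVec (fun _ => (1:ℝ)) (uu m k))
      = 1 + (cc m k * (1 - ((k:ℝ) * ((m:ℝ)+2)⁻¹ + ((m:ℝ) - k) * ((m:ℝ))⁻¹)) - 1)
          • Matrix.vecMulVec (fun _ => (1:ℝ)) (uu m k) := by
    match_scalars <;> ring
  rw [this, cc_key hm hk1 hk]
  simp

lemma Binv_mul_Bmat (hm : 3 ≤ m) (hk1 : 1 ≤ k) (hk : k ≤ m) :
    Binv m k * Bmat m k = 1 := by
  unfold Bmat Binv
  rw [Jm_eq]
  rw [Matrix.mul_sub, Matrix.add_mul, Matrix.add_mul, smul_mul_assoc, smul_mul_assoc,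
    Matrix.diagonal_mul_diagonal, diagonal_mul_vecMulVec, vecMulVec_mul_diagonal,
    vecMulVec_mul_vecMulVec]
  have e0 : (fun p => uu m k p * dd m k p) = fun _ => (1:ℝ) :=
    funext fun p => by rw [mul_comm]; exact dd_mul_uu hm p
  have e1 : (fun i => uu m k i * (1:ℝ)) = uu m k := funext fun p => mul_one _
  have e2 : (fun j : Fin m => uu m k j * dd m k j) = fun _ => (1:ℝ) := e0
  rw [e0, e1, sum_uu hk, smul_smul, Matrix.diagonal_one]
  have : (1 : Matrix (Fin m) (Fin m) ℝ)
      + cc m k • Matrix.vecMulVec (uu m k) (fun _ => (1:ℝ))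
      - (Matrix.vecMulVec (uu m k) (fun _ => (1:ℝ))
        + (cc m k * ((k:ℝ) * ((m:ℝ)+2)⁻¹ + ((m:ℝ) - k) * ((m:ℝ))⁻¹))
          • Matrix.vecMulVec (uu m k) (fun _ => (1:ℝ)))
      = 1 + (cc m k * (1 - ((k:ℝ) * ((m:ℝ)+2)⁻¹ + ((m:ℝ) - k) * ((m:ℝ))⁻¹)) - 1)
          • Matrix.vecMulVec (uu m k) (fun _ => (1:ℝ)) := by
    match_scalars <;> ring
  rw [this, cc_key hm hk1 hk]
  simp

variable (m k) in
def Pm : Matrix (Fin m) (Fin m) ℝ := (1/2:ℝ) • (Ainv m + Binv m k)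

variable (m k) in
def Qm : Matrix (Fin m) (Fin m) ℝ := (1/2:ℝ) • (Ainv m - Binv m k)

variable (m k) in
def Um : Matrix (Fin m) (Fin m) ℝ := (1/2:ℝ) • (Amat m + Bmat m k)

variable (m k) in
def Tmm : Matrix (Fin m) (Fin m) ℝ := (1/2:ℝ) • (Bmat m k - Amat m)

variable (m k) in
def Lb : Matrix (Fin m ⊕ Fin m) (Fin m ⊕ Fin m) ℝ :=
  Matrix.fromBlocks (Um m k) (-(Tmm m k)) (-(Tmm m k)) (Um m k)

variable (m k) in
def Mb : Matrix (Fin m ⊕ Fin m) (Fin m ⊕ Fin m) ℝ :=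
  Matrix.fromBlocks (Pm m k) (Qm m k) (Qm m k) (Pm m k)

variable (m) in
def Jb : Matrix (Fin m ⊕ Fin m) (Fin m ⊕ Fin m) ℝ :=
  Matrix.fromBlocks (Jm m) (Jm m) (Jm m) (Jm m)

lemma one_sub_smul_Jb (c : ℝ) :
    (1 : Matrix (Fin m ⊕ Fin m) (Fin m ⊕ Fin m) ℝ) - c • Jb m
      = Matrix.fromBlocks (1 - c • Jm m) (-(c • Jm m)) (-(c • Jm m)) (1 - c • Jm m) := by
  ext (i|i) (j|j) <;>
    simp [Jb, Jm, Matrix.one_apply, Matrix.fromBlocks]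

set_option maxHeartbeats 1000000 in
lemma Lb_mul_Mb (hm : 3 ≤ m) (hk1 : 1 ≤ k) (hk : k ≤ m) :
    Lb m k * Mb m k = 1 - ((2*(m:ℝ)))⁻¹ • Jb m := by
  have h := (hm0 (m := m) hm).ne'
  rw [Lb, Mb, Matrix.fromBlocks_multiply, one_sub_smul_Jb]
  have h1 : Um m k * Pm m k + -(Tmm m k) * Qm m k = 1 - ((2*(m:ℝ)))⁻¹ • Jm m := by
    unfold Um Pm Tmm Qm
    simp only [Matrix.neg_mul, Matrix.mul_neg, smul_mul_assoc, Matrix.mul_smul,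
      Matrix.add_mul, Matrix.mul_add, Matrix.sub_mul, Matrix.mul_sub, smul_smul, neg_smul,
      smul_add, smul_sub, smul_neg]
    rw [Amat_mul_Ainv hm, Bmat_mul_Binv hm hk1 hk]
    match_scalars <;> field_simp <;> ring
  have h2 : Um m k * Qm m k + -(Tmm m k) * Pm m k = -(((2*(m:ℝ)))⁻¹ • Jm m) := by
    unfold Um Pm Tmm Qm
    simp only [Matrix.neg_mul, Matrix.mul_neg, smul_mul_assoc, Matrix.mul_smul,
      Matrix.add_mul, Matrix.mul_add, Matrix.sub_mul, Matrix.mul_sub, smul_smul, neg_smul,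
      smul_add, smul_sub, smul_neg]
    rw [Amat_mul_Ainv hm, Bmat_mul_Binv hm hk1 hk]
    match_scalars <;> field_simp <;> ring
  have h3 : -(Tmm m k) * Pm m k + Um m k * Qm m k = -(((2*(m:ℝ)))⁻¹ • Jm m) := by
    rw [add_comm]; exact h2
  have h4 : -(Tmm m k) * Qm m k + Um m k * Pm m k = 1 - ((2*(m:ℝ)))⁻¹ • Jm m := by
    rw [add_comm]; exact h1
  rw [h1, h2, h3, h4]

set_option maxHeartbeats 1000000 in
lemma Mb_mul_Lb (hm : 3 ≤ m) (hk1 : 1 ≤ k) (hk : k ≤ m) :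
    Mb m k * Lb m k = 1 - ((2*(m:ℝ)))⁻¹ • Jb m := by
  have h := (hm0 (m := m) hm).ne'
  rw [Lb, Mb, Matrix.fromBlocks_multiply, one_sub_smul_Jb]
  have h1 : Pm m k * Um m k + Qm m k * -(Tmm m k) = 1 - ((2*(m:ℝ)))⁻¹ • Jm m := by
    unfold Um Pm Tmm Qm
    simp only [Matrix.neg_mul, Matrix.mul_neg, smul_mul_assoc, Matrix.mul_smul,
      Matrix.add_mul, Matrix.mul_add, Matrix.sub_mul, Matrix.mul_sub, smul_smul, neg_smul,
      smul_add, smul_sub, smul_neg]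
    rw [Ainv_mul_Amat hm, Binv_mul_Bmat hm hk1 hk]
    match_scalars <;> field_simp <;> ring
  have h2 : Pm m k * -(Tmm m k) + Qm m k * Um m k = -(((2*(m:ℝ)))⁻¹ • Jm m) := by
    unfold Um Pm Tmm Qm
    simp only [Matrix.neg_mul, Matrix.mul_neg, smul_mul_assoc, Matrix.mul_smul,
      Matrix.add_mul, Matrix.mul_add, Matrix.sub_mul, Matrix.mul_sub, smul_smul, neg_smul,
      smul_add, smul_sub, smul_neg]
    rw [Ainv_mul_Amat hm, Binv_mul_Bmat hm hk1 hk]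
    match_scalars <;> field_simp <;> ring
  have h3 : Qm m k * Um m k + Pm m k * -(Tmm m k) = -(((2*(m:ℝ)))⁻¹ • Jm m) := by
    rw [add_comm]; exact h2
  have h4 : Qm m k * -(Tmm m k) + Pm m k * Um m k = 1 - ((2*(m:ℝ)))⁻¹ • Jm m := by
    rw [add_comm]; exact h1
  rw [h1, h2, h3, h4]

lemma Jb_mul_Lb : Jb m * Lb m k = 0 := by
  rw [Jb, Lb, Matrix.fromBlocks_multiply]
  have h1 : Jm m * Um m k + Jm m * -(Tmm m k) = 0 := by
    unfold Um Tmm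
    simp only [Matrix.mul_neg, Matrix.mul_smul, Matrix.mul_add, Matrix.mul_sub]
    rw [Jm_mul_Amat]
    match_scalars <;> ring
  have h2 : Jm m * -(Tmm m k) + Jm m * Um m k = 0 := by
    rw [add_comm]; exact h1
  rw [h1, h2]
  ext (i|i) (j|j) <;> simp [Matrix.fromBlocks]

lemma Jb_mul_Mb (hm : 3 ≤ m) : Jb m * Mb m k = 0 := by
  rw [Jb, Mb, Matrix.fromBlocks_multiply]
  have h1 : Jm m * Pm m k + Jm m * Qm m k = 0 := by
    unfold Pm Qm
    simp only [Matrix.mul_smul, Matrix.mul_add, Matrix.mul_sub]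
    rw [Jm_mul_Ainv hm]
    match_scalars <;> ring
  have h2 : Jm m * Qm m k + Jm m * Pm m k = 0 := by
    rw [add_comm]; exact h1
  rw [h1, h2]
  ext (i|i) (j|j) <;> simp [Matrix.fromBlocks]

lemma Jb_transpose : (Jb m)ᵀ = Jb m := by
  ext (i|i) (j|j) <;> simp [Jb, Jm, Matrix.fromBlocks]

lemma isPInv_b (hm : 3 ≤ m) (hk1 : 1 ≤ k) (hk : k ≤ m) :
    IsPInv (Lb m k) (Mb m k) := by
  have hLM := Lb_mul_Mb hm hk1 hk
  have hML := Mb_mul_Lb hm hk1 hk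
  refine ⟨?_, ?_, ?_, ?_⟩
  · rw [hLM, Matrix.sub_mul, Matrix.one_mul, smul_mul_assoc, Jb_mul_Lb, smul_zero, sub_zero]
  · rw [hML, Matrix.sub_mul, Matrix.one_mul, smul_mul_assoc, Jb_mul_Mb hm,
      smul_zero, sub_zero]
  · rw [hLM]
    simp [Matrix.transpose_sub, Matrix.transpose_smul, Jb_transpose]
  · rw [hML]
    simp [Matrix.transpose_sub, Matrix.transpose_smul, Jb_transpose]

lemma pinv_unique {N : Type} [Fintype N] (A B B' : Matrix N N ℝ)
    (h : IsPInv A B) (h' : IsPInv A B') : B = B' := by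
  obtain ⟨h1, h2, h3, h4⟩ := h
  obtain ⟨h1', h2', h3', h4'⟩ := h'
  have e1 : A * B' = A * B := by
    calc A * B' = (A * B * A) * B' := by rw [h1]
    _ = (A * B) * (A * B') := by rw [Matrix.mul_assoc, Matrix.mul_assoc]
    _ = (A * B)ᵀ * (A * B')ᵀ := by rw [h3, h3']
    _ = Bᵀ * Aᵀ * (B'ᵀ * Aᵀ) := by rw [Matrix.transpose_mul, Matrix.transpose_mul]
    _ = Bᵀ * (Aᵀ * B'ᵀ * Aᵀ) := by simp only [Matrix.mul_assoc]
    _ = Bᵀ * (A * B' * A)ᵀ := by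
        simp only [Matrix.transpose_mul, Matrix.mul_assoc]
    _ = Bᵀ * Aᵀ := by rw [h1']
    _ = (A * B)ᵀ := by rw [Matrix.transpose_mul]
    _ = A * B := h3
  have e2 : B' * A = B * A := by
    calc B' * A = B' * (A * B * A) := by rw [h1]
    _ = (B' * A) * (B * A) := by
        simp only [Matrix.mul_assoc]
    _ = (B' * A)ᵀ * (B * A)ᵀ := by rw [h4', h4]
    _ = Aᵀ * B'ᵀ * (Aᵀ * Bᵀ) := by rw [Matrix.transpose_mul, Matrix.transpose_mul]
    _ = (Aᵀ * B'ᵀ * Aᵀ) * Bᵀ := by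
        simp only [Matrix.mul_assoc]
    _ = (A * B' * A)ᵀ * Bᵀ := by
        simp only [Matrix.transpose_mul, Matrix.mul_assoc]
    _ = Aᵀ * Bᵀ := by rw [h1']
    _ = (B * A)ᵀ := by rw [Matrix.transpose_mul]
    _ = B * A := h4
  calc B = B * A * B := h2.symm
  _ = B * (A * B) := by rw [Matrix.mul_assoc]
  _ = B * (A * B') := by rw [e1]
  _ = (B * A) * B' := by rw [Matrix.mul_assoc]
  _ = (B' * A) * B' := by rw [e2]
  _ = B' := h2'

lemma isPInv_submatrix {N M : Type} [Fintype N] [Fintype M] [DecidableEq N] [DecidableEq M]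
    (e : N ≃ M) (A B : Matrix M M ℝ) (h : IsPInv A B) :
    IsPInv (A.submatrix e e) (B.submatrix e e) := by
  obtain ⟨h1, h2, h3, h4⟩ := h
  refine ⟨?_, ?_, ?_, ?_⟩
  · rw [Matrix.submatrix_mul_equiv, Matrix.submatrix_mul_equiv, h1]
  · rw [Matrix.submatrix_mul_equiv, Matrix.submatrix_mul_equiv, h2]
  · rw [Matrix.submatrix_mul_equiv, Matrix.transpose_submatrix, h3]
  · rw [Matrix.submatrix_mul_equiv, Matrix.transpose_submatrix, h4]

variable (m k) in
def Ed : Matrix (Fin m) (Fin m) ℝ :=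
  Matrix.diagonal (fun p => if (p:ℕ) < k then (1:ℝ) else 0)

variable (m k) in
def Phib : Matrix (Fin m ⊕ Fin m) (Fin m ⊕ Fin m) ℝ :=
  Matrix.fromBlocks (Jm m - 1) (Ed m k) (Ed m k) (Jm m - 1)

variable (m) in
def se : (Fin m ⊕ Fin m) ≃ Fin (m+m) := finSumFinEquiv

lemma advPhi_blocks (hk : k ≤ m) (a b : Fin m ⊕ Fin m) :
    advPhi (m+m) k (se m a) (se m b) = Phib m k a b := by
  have hhalf : (m+m)/2 = m := by omega
  cases a <;> cases b <;>
  · simp only [se, finSumFinEquiv_apply_left, finSumFinEquiv_apply_right, advPhi,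
      Matrix.of_apply, Phib, Matrix.fromBlocks_apply₁₁, Matrix.fromBlocks_apply₁₂,
      Matrix.fromBlocks_apply₂₁, Matrix.fromBlocks_apply₂₂, Jm, Ed, Matrix.sub_apply,
      Matrix.one_apply, Matrix.diagonal_apply, Fin.coe_castAdd, Fin.coe_natAdd, hhalf,
      ne_eq, Fin.ext_iff]
    split_ifs <;> first | omega | (norm_num <;> omega)

lemma advPhi_eq (hk : k ≤ m) :
    advPhi (m+m) k = (Phib m k).submatrix (se m).symm (se m).symm := by
  ext i j
  have h := advPhi_blocks hk ((se m).symm i) ((se m).symm j)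
  simpa [Equiv.apply_symm_apply] using h

lemma lap_submatrix (Ψ : Matrix (Fin m ⊕ Fin m) (Fin m ⊕ Fin m) ℝ) :
    lap (Ψ.submatrix (se m).symm (se m).symm)
      = (Matrix.diagonal (fun a => ∑ b, Ψ a b) - Ψ).submatrix (se m).symm (se m).symm := by
  ext i j
  simp only [lap, Matrix.sub_apply, Matrix.submatrix_apply]
  congr 1
  by_cases hij : i = j
  · subst hij
    rw [Matrix.diagonal_apply_eq, Matrix.diagonal_apply_eq]
    exact Equiv.sum_comp (se m).symm (fun b => Ψ ((se m).symm i) b)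
  · rw [Matrix.diagonal_apply_ne _ hij,
      Matrix.diagonal_apply_ne _ (fun hc => hij (((se m).symm).injective hc))]

lemma diag_sum (f : Fin m ⊕ Fin m → ℝ) :
    Matrix.diagonal f = Matrix.fromBlocks (Matrix.diagonal (f ∘ Sum.inl)) 0 0
      (Matrix.diagonal (f ∘ Sum.inr)) := by
  ext (a|a) (b|b) <;> simp [Matrix.diagonal_apply, Sum.inl.injEq, Sum.inr.injEq]

lemma fromBlocks_sub (A B C D A' B' C' D' : Matrix (Fin m) (Fin m) ℝ) :
    Matrix.fromBlocks A B C D - Matrix.fromBlocks A' B' C' D'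
      = Matrix.fromBlocks (A - A') (B - B') (C - C') (D - D') := by
  ext (a|a) (b|b) <;> simp [Matrix.fromBlocks]

lemma deg_blocks (hm : 3 ≤ m) (hk : k ≤ m) :
    Matrix.diagonal (fun a => ∑ b, Phib m k a b) - Phib m k = Lb m k := by
  have hrow1 : ∀ p : Fin m, (∑ q, (Jm m - 1) p q) = (m:ℝ) - 1 := by
    intro p
    simp [Jm, Matrix.sub_apply, Matrix.one_apply, Finset.sum_sub_distrib,
      Finset.sum_ite_eq]
  have hrow2 : ∀ p : Fin m, (∑ q, Ed m k p q) = (if (p:ℕ) < k then (1:ℝ) else 0) := by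
    intro p
    simp [Ed, Matrix.diagonal_apply, Finset.sum_ite_eq']
  have hdeg : ∀ p : Fin m,
      (∑ b, Matrix.fromBlocks (Jm m - 1) (Ed m k) (Ed m k) (Jm m - 1) (Sum.inl p) b)
      = (m:ℝ) - 1 + (if (p:ℕ) < k then (1:ℝ) else 0) := by
    intro p
    rw [Fintype.sum_sum_type]
    simp only [Matrix.fromBlocks_apply₁₁, Matrix.fromBlocks_apply₁₂]
    rw [hrow1 p, hrow2 p]
  have hdeg2 : ∀ p : Fin m,
      (∑ b, Matrix.fromBlocks (Jm m - 1) (Ed m k) (Ed m k) (Jm m - 1) (Sum.inr p) b)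
      = (m:ℝ) - 1 + (if (p:ℕ) < k then (1:ℝ) else 0) := by
    intro p
    rw [Fintype.sum_sum_type]
    simp only [Matrix.fromBlocks_apply₂₁, Matrix.fromBlocks_apply₂₂]
    rw [hrow1 p, hrow2 p]
    ring
  have hd : Matrix.diagonal ((fun a => ∑ b,
        Matrix.fromBlocks (Jm m - 1) (Ed m k) (Ed m k) (Jm m - 1) a b) ∘ Sum.inl)
      - (Jm m - 1) = Um m k := by
    have he1 : ((fun a => ∑ b,
        Matrix.fromBlocks (Jm m - 1) (Ed m k) (Ed m k) (Jm m - 1) a b) ∘ Sum.inl)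
        = fun p : Fin m => (m:ℝ) - 1 + (if (p:ℕ) < k then (1:ℝ) else 0) :=
      funext fun p => hdeg p
    rw [he1]
    ext p q
    simp only [Matrix.sub_apply, Matrix.diagonal_apply, Jm, Matrix.one_apply, Um, Amat,
      Bmat, dd, Matrix.smul_apply, Matrix.add_apply, Matrix.of_apply, smul_eq_mul]
    split_ifs <;> norm_num <;> ring
  have hd2 : Matrix.diagonal ((fun a => ∑ b,
        Matrix.fromBlocks (Jm m - 1) (Ed m k) (Ed m k) (Jm m - 1) a b) ∘ Sum.inr)
      - (Jm m - 1) = Um m k := by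
    have he1 : ((fun a => ∑ b,
        Matrix.fromBlocks (Jm m - 1) (Ed m k) (Ed m k) (Jm m - 1) a b) ∘ Sum.inr)
        = fun p : Fin m => (m:ℝ) - 1 + (if (p:ℕ) < k then (1:ℝ) else 0) :=
      funext fun p => hdeg2 p
    rw [he1]
    ext p q
    simp only [Matrix.sub_apply, Matrix.diagonal_apply, Jm, Matrix.one_apply, Um, Amat,
      Bmat, dd, Matrix.smul_apply, Matrix.add_apply, Matrix.of_apply, smul_eq_mul]
    split_ifs <;> norm_num <;> ring
  have he : (0 : Matrix (Fin m) (Fin m) ℝ) - Ed m k = -(Tmm m k) := by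
    ext p q
    simp only [Matrix.sub_apply, Matrix.zero_apply, Ed, Matrix.diagonal_apply, Tmm, Bmat,
      Amat, dd, Matrix.smul_apply, Matrix.sub_apply, Matrix.neg_apply, Matrix.of_apply,
      Jm, Matrix.one_apply, smul_eq_mul]
    split_ifs <;> norm_num <;> ring
  rw [Phib, diag_sum, fromBlocks_sub, Lb, hd, hd2, he]

lemma lap_advPhi (hm : 3 ≤ m) (hk : k ≤ m) :
    lap (advPhi (m+m) k) = (Lb m k).submatrix (se m).symm (se m).symm := by
  rw [advPhi_eq hk, lap_submatrix, deg_blocks hm hk]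

variable (m k) in
def Tv : ℝ := ((2*(m:ℝ))*((2*(m:ℝ))+4)^2 + 32*(k:ℝ)^2 - 32*(k:ℝ))
    / (4*(k:ℝ)^2*((2*(m:ℝ))+4)^2)

lemma sum_sq_one (p : Fin m) (a : ℝ) (h : Fin m → ℝ) :
    ∑ r, ((if r = p then a else 0) + h r)^2
      = a^2 + 2*a*h p + ∑ r, (h r)^2 := by
  have hpt : ∀ r : Fin m, ((if r = p then a else 0) + h r)^2
      = (h r)^2 + (if r = p then a^2 + 2*a*h r else 0) := by
    intro r; by_cases hr : r = p <;> simp [hr] <;> ring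
  rw [Finset.sum_congr rfl fun r _ => hpt r, Finset.sum_add_distrib,
    Finset.sum_ite_eq' Finset.univ p (fun r => a^2 + 2*a*h r)]
  simp only [Finset.mem_univ, if_true]
  ring

lemma sum_sq_two (p q : Fin m) (hpq : p ≠ q) (a b : ℝ) (h : Fin m → ℝ) :
    ∑ r, ((if r = p then a else 0) - (if r = q then b else 0) + h r)^2
      = a^2 + b^2 + 2*a*h p - 2*b*h q + ∑ r, (h r)^2 := by
  have hpt : ∀ r : Fin m, ((if r = p then a else 0) - (if r = q then b else 0) + h r)^2
      = (h r)^2 + ((if r = p then a^2 + 2*a*h r else 0)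
        + (if r = q then b^2 - 2*b*h r else 0)) := by
    intro r
    split_ifs with h1 h2
    · exact absurd (h1.symm.trans h2) hpq
    · ring
    · ring
    · ring
  rw [Finset.sum_congr rfl fun r _ => hpt r, Finset.sum_add_distrib,
    Finset.sum_add_distrib,
    Finset.sum_ite_eq' Finset.univ p (fun r => a^2 + 2*a*h r),
    Finset.sum_ite_eq' Finset.univ q (fun r => b^2 - 2*b*h r)]
  simp only [Finset.mem_univ, if_true]
  ring

lemma nonzeros (hm : 3 ≤ m) (hk1 : 1 ≤ k) :
    ((m:ℝ) ≠ 0) ∧ ((k:ℝ) ≠ 0) ∧ ((m:ℝ)+2 ≠ 0) ∧ (2*(m:ℝ)+4 ≠ 0) := by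
  have h1 := hm0 (m := m) hm
  have h2 := hk0 (k := k) hk1
  refine ⟨h1.ne', h2.ne', by nlinarith, by nlinarith⟩

lemma sum_Binv_sq (hm : 3 ≤ m) (hk1 : 1 ≤ k) (hk : k ≤ m) (p : Fin m)
    (hp : (p:ℕ) < k) : 2 * (∑ r, (Binv m k r p)^2) = Tv m k := by
  obtain ⟨hm', hk', ht', h2t'⟩ := nonzeros (m := m) (k := k) hm hk1
  have hupl : uu m k p = ((m:ℝ)+2)⁻¹ := by rw [uu_eq]; exact if_pos hp
  rw [Finset.sum_congr rfl fun r _ => by rw [Binv_apply r p]]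
  rw [sum_sq_one p (uu m k p) (fun r => (cc m k * uu m k p) * uu m k r)]
  have hsq : ∀ r : Fin m, ((cc m k * uu m k p) * uu m k r)^2
      = (cc m k * uu m k p)^2 * (uu m k r)^2 := fun r => by ring
  rw [Finset.sum_congr rfl fun r _ => hsq r, ← Finset.mul_sum, sum_uu_sq hk, hupl]
  unfold cc Tv
  field_simp
  ring

lemma sum_Ainv_diff_sq (hm : 3 ≤ m) (p q : Fin m) (hpq : p ≠ q) :
    ∑ r, (Ainv m r p - Ainv m r q)^2 = 2*((m:ℝ)⁻¹)^2 := by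
  have hpt : ∀ r : Fin m, Ainv m r p - Ainv m r q
      = (if r = p then ((m:ℝ))⁻¹ else 0) - (if r = q then ((m:ℝ))⁻¹ else 0) + 0 := by
    intro r; rw [Ainv_apply, Ainv_apply]; ring
  rw [Finset.sum_congr rfl fun r _ => by rw [hpt r], sum_sq_two p q hpq]
  simp
  ring

lemma sum_Binv_diff_sq (p q : Fin m) (hpq : p ≠ q) :
    ∑ r, (Binv m k r p - Binv m k r q)^2
      = (uu m k p)^2 + (uu m k q)^2
        + 2*(uu m k p)*((cc m k * (uu m k p - uu m k q)) * uu m k p)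
        - 2*(uu m k q)*((cc m k * (uu m k p - uu m k q)) * uu m k q)
        + (cc m k * (uu m k p - uu m k q))^2 * ∑ r, (uu m k r)^2 := by
  have hpt : ∀ r : Fin m, Binv m k r p - Binv m k r q
      = (if r = p then uu m k p else 0) - (if r = q then uu m k q else 0)
        + (cc m k * (uu m k p - uu m k q)) * uu m k r := by
    intro r; rw [Binv_apply, Binv_apply]; ring
  rw [Finset.sum_congr rfl fun r _ => by rw [hpt r], sum_sq_two p q hpq]
  have hsq : ∀ r : Fin m, ((cc m k * (uu m k p - uu m k q)) * uu m k r)^2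
      = (cc m k * (uu m k p - uu m k q))^2 * (uu m k r)^2 := fun r => by ring
  rw [Finset.sum_congr rfl fun r _ => hsq r, ← Finset.mul_sum]

lemma PQ_add (p q : Fin m) :
    (∑ r, (Pm m k r p - Pm m k r q)^2) + (∑ r, (Qm m k r p - Qm m k r q)^2)
      = 1/2 * (∑ r, (Ainv m r p - Ainv m r q)^2)
        + 1/2 * (∑ r, (Binv m k r p - Binv m k r q)^2) := by
  rw [← Finset.sum_add_distrib, Finset.mul_sum, Finset.mul_sum, ← Finset.sum_add_distrib]
  refine Finset.sum_congr rfl fun r _ => ?_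
  simp only [Pm, Qm, Matrix.smul_apply, Matrix.add_apply, Matrix.sub_apply, smul_eq_mul]
  ring

lemma bound_ll (hm : 3 ≤ m) (h2k : 2 ≤ k) (hk : k ≤ m) (up uq : ℝ)
    (hup : up = ((m:ℝ)+2)⁻¹) (huq : uq = ((m:ℝ)+2)⁻¹) :
    1/2 * (2*((m:ℝ)⁻¹)^2)
      + 1/2 * (up^2 + uq^2 + 2*up*((cc m k * (up - uq)) * up)
        - 2*uq*((cc m k * (up - uq)) * uq)
        + (cc m k * (up - uq))^2
          * ((k:ℝ) * (((m:ℝ)+2)⁻¹)^2 + ((m:ℝ) - k) * (((m:ℝ))⁻¹)^2))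
      ≤ Tv m k := by
  obtain ⟨hm', hk', ht', h2t'⟩ := nonzeros (m := m) (k := k) hm (by omega)
  have hmr : (3:ℝ) ≤ (m:ℝ) := by exact_mod_cast hm
  have hkr : (2:ℝ) ≤ (k:ℝ) := by exact_mod_cast h2k
  have hkm : (k:ℝ) ≤ (m:ℝ) := by exact_mod_cast hk
  subst hup huq
  rw [← sub_nonneg]
  refine le_trans (?_ : (0:ℝ) ≤
      ((m:ℝ)^3*((m:ℝ)+2)^2 + 2*(k:ℝ)^2*(m:ℝ)^2 - 4*(k:ℝ)*(m:ℝ)^2 - 2*(k:ℝ)^2*((m:ℝ)+2)^2)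
        / (2*(k:ℝ)^2*(m:ℝ)^2*((m:ℝ)+2)^2)) (le_of_eq ?_)
  · apply div_nonneg _ (by positivity)
    have e1 : 2*(k:ℝ)^2 ≤ (m:ℝ)^3 := by
      nlinarith [mul_nonneg (sub_nonneg.2 hkm) (by positivity : (0:ℝ) ≤ (m:ℝ)+(k:ℝ))]
    have e2 : (0:ℝ) ≤ ((m:ℝ)^3 - 2*(k:ℝ)^2) * ((m:ℝ)+2)^2 :=
      mul_nonneg (by linarith) (sq_nonneg _)
    have e3 : (0:ℝ) ≤ 2*(k:ℝ)*(m:ℝ)^2*((k:ℝ)-2) := by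
      apply mul_nonneg _ (by linarith)
      positivity
    nlinarith [e2, e3]
  · unfold Tv cc
    field_simp
    ring

lemma bound_gg (hm : 3 ≤ m) (hk1 : 1 ≤ k) (hk2m : k + 2 ≤ m) (up uq : ℝ)
    (hup : up = ((m:ℝ))⁻¹) (huq : uq = ((m:ℝ))⁻¹) :
    1/2 * (2*((m:ℝ)⁻¹)^2)
      + 1/2 * (up^2 + uq^2 + 2*up*((cc m k * (up - uq)) * up)
        - 2*uq*((cc m k * (up - uq)) * uq)
        + (cc m k * (up - uq))^2
          * ((k:ℝ) * (((m:ℝ)+2)⁻¹)^2 + ((m:ℝ) - k) * (((m:ℝ))⁻¹)^2))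
      ≤ Tv m k := by
  obtain ⟨hm', hk', ht', h2t'⟩ := nonzeros (m := m) (k := k) hm hk1
  have hmr : (3:ℝ) ≤ (m:ℝ) := by exact_mod_cast hm
  have hkr : (1:ℝ) ≤ (k:ℝ) := by exact_mod_cast hk1
  have hkm : (k:ℝ) + 2 ≤ (m:ℝ) := by exact_mod_cast hk2m
  subst hup huq
  rw [← sub_nonneg]
  refine le_trans (?_ : (0:ℝ) ≤
      ((m:ℝ)^3*((m:ℝ)+2)^2 + 4*(k:ℝ)^2*(m:ℝ)^2 - 4*(k:ℝ)*(m:ℝ)^2 - 4*(k:ℝ)^2*((m:ℝ)+2)^2)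
        / (2*(k:ℝ)^2*(m:ℝ)^2*((m:ℝ)+2)^2)) (le_of_eq ?_)
  · apply div_nonneg _ (by positivity)
    have e0 : (0:ℝ) ≤ (m:ℝ)^2 - (m:ℝ) + 13 := by nlinarith [sq_nonneg ((m:ℝ))]
    have e1 : 4*(k:ℝ)^2 ≤ 4*((m:ℝ)-2)^2 := by
      nlinarith [mul_nonneg (by linarith : (0:ℝ) ≤ (m:ℝ)-2-(k:ℝ))
        (by linarith : (0:ℝ) ≤ (m:ℝ)-2+(k:ℝ))]
    have e2 : 4*((m:ℝ)-2)^2 ≤ (m:ℝ)^3 := by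
      nlinarith [mul_nonneg (by linarith : (0:ℝ) ≤ (m:ℝ)-3) e0]
    have e3 : (0:ℝ) ≤ ((m:ℝ)^3 - 4*(k:ℝ)^2) * ((m:ℝ)+2)^2 :=
      mul_nonneg (by linarith) (sq_nonneg _)
    have e4 : (0:ℝ) ≤ 4*(k:ℝ)*(m:ℝ)^2*((k:ℝ)-1) := by
      apply mul_nonneg _ (by linarith)
      positivity
    nlinarith [e3, e4]
  · unfold Tv cc
    field_simp
    ring

lemma bound_mixed (hm : 3 ≤ m) (hk1 : 1 ≤ k) (hk1m : k + 1 ≤ m) (up uq : ℝ)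
    (h : up = ((m:ℝ)+2)⁻¹ ∧ uq = ((m:ℝ))⁻¹ ∨ up = ((m:ℝ))⁻¹ ∧ uq = ((m:ℝ)+2)⁻¹) :
    1/2 * (2*((m:ℝ)⁻¹)^2)
      + 1/2 * (up^2 + uq^2 + 2*up*((cc m k * (up - uq)) * up)
        - 2*uq*((cc m k * (up - uq)) * uq)
        + (cc m k * (up - uq))^2
          * ((k:ℝ) * (((m:ℝ)+2)⁻¹)^2 + ((m:ℝ) - k) * (((m:ℝ))⁻¹)^2))
      ≤ Tv m k := by
  obtain ⟨hm', hk', ht', h2t'⟩ := nonzeros (m := m) (k := k) hm hk1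
  have hmr : (3:ℝ) ≤ (m:ℝ) := by exact_mod_cast hm
  have hkr : (1:ℝ) ≤ (k:ℝ) := by exact_mod_cast hk1
  have hkm : (k:ℝ) + 1 ≤ (m:ℝ) := by exact_mod_cast hk1m
  have key : (0:ℝ) ≤
      (((m:ℝ)+2)^2*((m:ℝ)^3 - (m:ℝ) - 3*(k:ℝ)^2 - (k:ℝ)) + 3*(k:ℝ)*(m:ℝ)^2*((k:ℝ)-1))
        / (2*(k:ℝ)^2*(m:ℝ)^2*((m:ℝ)+2)^2) := by
    apply div_nonneg _ (by positivity)
    have h1 : 3*(k:ℝ)^2 + (k:ℝ) ≤ 3*((m:ℝ)-1)^2 + ((m:ℝ)-1) := by nlinarith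
    have h2 : 3*((m:ℝ)-1)^2 + ((m:ℝ)-1) ≤ (m:ℝ)^3 - (m:ℝ) := by nlinarith
    have h3 : (0:ℝ) ≤ 3*(k:ℝ)*(m:ℝ)^2*((k:ℝ)-1) := by
      apply mul_nonneg _ (by nlinarith)
      positivity
    nlinarith [sq_nonneg ((m:ℝ)+2)]
  rcases h with ⟨hup, huq⟩ | ⟨hup, huq⟩ <;> subst hup huq <;> rw [← sub_nonneg] <;>
    refine le_trans key (le_of_eq ?_) <;> (unfold Tv cc; field_simp; ring)

lemma same_cluster_bound (hm : 3 ≤ m) (hk1 : 1 ≤ k) (hk : k ≤ m) (p q : Fin m)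
    (hpq : p ≠ q) :
    (∑ r, (Pm m k r p - Pm m k r q)^2) + (∑ r, (Qm m k r p - Qm m k r q)^2)
      ≤ Tv m k := by
  have hvne : (p:ℕ) ≠ (q:ℕ) := fun h => hpq (Fin.ext h)
  have hpm := p.isLt
  have hqm := q.isLt
  rw [PQ_add p q, sum_Ainv_diff_sq hm p q hpq, sum_Binv_diff_sq p q hpq, sum_uu_sq hk]
  by_cases hp : (p:ℕ) < k <;> by_cases hq : (q:ℕ) < k
  · exact bound_ll hm (by omega) hk _ _
      (by rw [uu_eq]; exact if_pos hp) (by rw [uu_eq]; exact if_pos hq)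
  · exact bound_mixed hm hk1 (by omega) _ _
      (Or.inl ⟨by rw [uu_eq]; exact if_pos hp, by rw [uu_eq]; exact if_neg hq⟩)
  · exact bound_mixed hm hk1 (by omega) _ _
      (Or.inr ⟨by rw [uu_eq]; exact if_neg hp, by rw [uu_eq]; exact if_pos hq⟩)
  · exact bound_gg hm hk1 (by omega) _ _
      (by rw [uu_eq]; exact if_neg hp) (by rw [uu_eq]; exact if_neg hq)

lemma bridge_eq (hm : 3 ≤ m) (hk1 : 1 ≤ k) (hk : k ≤ m) (p : Fin m)
    (hp : (p:ℕ) < k) :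
    (∑ r, (Pm m k r p - Qm m k r p)^2) + (∑ r, (Qm m k r p - Pm m k r p)^2)
      = Tv m k := by
  have h1 : ∀ r, Pm m k r p - Qm m k r p = Binv m k r p := by
    intro r
    simp only [Pm, Qm, Matrix.smul_apply, Matrix.add_apply, Matrix.sub_apply, smul_eq_mul]
    ring
  have h2 : ∀ r : Fin m, (Qm m k r p - Pm m k r p)^2 = (Binv m k r p)^2 := by
    intro r
    rw [show Qm m k r p - Pm m k r p = -(Pm m k r p - Qm m k r p) by ring, neg_sq, h1 r]
  rw [Finset.sum_congr rfl fun r _ => by rw [h1 r],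
      Finset.sum_congr rfl fun r _ => h2 r, ← two_mul]
  exact sum_Binv_sq hm hk1 hk p hp

end

end Stmt14Aux


/-- Laplacian pseudoinverse column differences for the advantageous
two-clique graph `G(n,k)`: value at the bridge edges, and maximality there. -/
theorem stmt14 (n k : ℕ) (hn : 6 ≤ n) (hev : Even n) (hk1 : 1 ≤ k) (hk : k ≤ n / 2)
    (M : Matrix (Fin n) (Fin n) ℝ) (hM : IsPInv (lap (advPhi n k)) M) :
    (∀ i j : Fin n, (i : ℕ) < k → (j : ℕ) = (i : ℕ) + n / 2 →
      ∑ r, (M r i - M r j) ^ 2 =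
        ((n : ℝ) * ((n : ℝ) + 4) ^ 2 + 32 * (k : ℝ) ^ 2 - 32 * k) /
          (4 * (k : ℝ) ^ 2 * ((n : ℝ) + 4) ^ 2)) ∧
    (∀ i j : Fin n, 0 < advPhi n k i j →
      ∑ r, (M r i - M r j) ^ 2 ≤
        ((n : ℝ) * ((n : ℝ) + 4) ^ 2 + 32 * (k : ℝ) ^ 2 - 32 * k) /
          (4 * (k : ℝ) ^ 2 * ((n : ℝ) + 4) ^ 2)) := by
  obtain ⟨m, rfl⟩ := hev
  have hm : 3 ≤ m := by omega
  have hhalf : (m + m) / 2 = m := by omega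
  rw [hhalf] at hk
  have hL := Stmt14Aux.lap_advPhi (m := m) (k := k) hm hk
  have hMb := Stmt14Aux.isPInv_submatrix (Stmt14Aux.se m).symm _ _
    (Stmt14Aux.isPInv_b (m := m) (k := k) hm hk1 hk)
  have hMeq : M = (Stmt14Aux.Mb m k).submatrix (Stmt14Aux.se m).symm (Stmt14Aux.se m).symm :=
    Stmt14Aux.pinv_unique _ _ _ (hL ▸ hM) hMb
  have hTv : Stmt14Aux.Tv m k =
      (((m + m : ℕ) : ℝ) * (((m + m : ℕ) : ℝ) + 4) ^ 2 + 32 * (k : ℝ) ^ 2 - 32 * k) /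
        (4 * (k : ℝ) ^ 2 * (((m + m : ℕ) : ℝ) + 4) ^ 2) := by
    unfold Stmt14Aux.Tv
    push_cast
    ring
  have hsum : ∀ (a b : Fin m ⊕ Fin m),
      (∑ r : Fin (m + m),
        ((Stmt14Aux.Mb m k).submatrix (Stmt14Aux.se m).symm (Stmt14Aux.se m).symm r
            ((Stmt14Aux.se m) a)
          - (Stmt14Aux.Mb m k).submatrix (Stmt14Aux.se m).symm (Stmt14Aux.se m).symm r
            ((Stmt14Aux.se m) b)) ^ 2)
      = (∑ p' : Fin m, (Stmt14Aux.Mb m k (Sum.inl p') a - Stmt14Aux.Mb m k (Sum.inl p') b) ^ 2)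
        + (∑ p' : Fin m, (Stmt14Aux.Mb m k (Sum.inr p') a - Stmt14Aux.Mb m k (Sum.inr p') b) ^ 2) := by
    intro a b
    rw [← Equiv.sum_comp (Stmt14Aux.se m)
      (fun r : Fin (m + m) =>
        ((Stmt14Aux.Mb m k).submatrix (Stmt14Aux.se m).symm (Stmt14Aux.se m).symm r
            ((Stmt14Aux.se m) a)
          - (Stmt14Aux.Mb m k).submatrix (Stmt14Aux.se m).symm (Stmt14Aux.se m).symm r
            ((Stmt14Aux.se m) b)) ^ 2)]
    simp only [Matrix.submatrix_apply, Equiv.symm_apply_apply]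
    rw [Fintype.sum_sum_type]
  constructor
  · intro i j hik hij
    rw [hhalf] at hij
    have hpm : (i : ℕ) < m := by omega
    set p : Fin m := ⟨(i : ℕ), hpm⟩ with hpdef
    have hi : (Stmt14Aux.se m) (Sum.inl p) = i := by
      apply Fin.ext
      simp [Stmt14Aux.se, finSumFinEquiv_apply_left]
      rfl
    have hj : (Stmt14Aux.se m) (Sum.inr p) = j := by
      apply Fin.ext
      simp [Stmt14Aux.se, finSumFinEquiv_apply_right]
      have hp1 : (p : ℕ) = (i : ℕ) := rfl
      have hp2 : ((⟨(i : ℕ), hpm⟩ : Fin m) : ℕ) = (i : ℕ) := rfl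
      omega
    rw [hMeq, ← hi, ← hj, hsum (Sum.inl p) (Sum.inr p)]
    simp only [Stmt14Aux.Mb, Matrix.fromBlocks_apply₁₁, Matrix.fromBlocks_apply₁₂,
      Matrix.fromBlocks_apply₂₁, Matrix.fromBlocks_apply₂₂]
    rw [Stmt14Aux.bridge_eq hm hk1 hk p hik, hTv]
  · intro i j hpos
    rw [Stmt14Aux.advPhi_eq hk] at hpos
    rw [hMeq, ← hTv]
    have hi := (Stmt14Aux.se m).apply_symm_apply i
    have hj := (Stmt14Aux.se m).apply_symm_apply j
    rcases hsi : (Stmt14Aux.se m).symm i with p | p <;>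
      rcases hsj : (Stmt14Aux.se m).symm j with q | q <;>
      rw [hsi] at hi <;> rw [hsj] at hj <;>
      rw [← hi, ← hj, hsum] <;>
      rw [Matrix.submatrix_apply, hsi, hsj] at hpos <;>
      simp only [Stmt14Aux.Mb, Stmt14Aux.Phib, Matrix.fromBlocks_apply₁₁,
        Matrix.fromBlocks_apply₁₂, Matrix.fromBlocks_apply₂₁,
        Matrix.fromBlocks_apply₂₂] at hpos ⊢
    · -- inl inl : same cluster
      have hpq : p ≠ q := by
        intro h
        subst h
        simp [Stmt14Aux.Jm, Matrix.sub_apply, Matrix.one_apply] at hpos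
      exact Stmt14Aux.same_cluster_bound hm hk1 hk p q hpq
    · -- inl inr : bridge
      have hpq : p = q ∧ (p : ℕ) < k := by
        simp only [Stmt14Aux.Ed, Matrix.diagonal_apply] at hpos
        split_ifs at hpos with h1 h2
        · exact ⟨h1, h2⟩
        · norm_num at hpos
        · norm_num at hpos
      obtain ⟨rfl, hpk⟩ := hpq
      exact le_of_eq (Stmt14Aux.bridge_eq hm hk1 hk p hpk)
    · -- inr inl : bridge reversed
      have hpq : p = q ∧ (q : ℕ) < k := by
        simp only [Stmt14Aux.Ed, Matrix.diagonal_apply] at hpos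
        split_ifs at hpos with h1 h2
        · exact ⟨h1, h1 ▸ h2⟩
        · norm_num at hpos
        · norm_num at hpos
      obtain ⟨rfl, hpk⟩ := hpq
      rw [add_comm]
      exact le_of_eq (Stmt14Aux.bridge_eq hm hk1 hk p hpk)
    · -- inr inr : same cluster
      have hpq : p ≠ q := by
        intro h
        subst h
        simp [Stmt14Aux.Jm, Matrix.sub_apply, Matrix.one_apply] at hpos
      rw [add_comm]
      exact Stmt14Aux.same_cluster_bound hm hk1 hk p q hpq
end
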